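/- Corollary (rewards with matching advantage functions induce the same value differences): Let P be a transition matrix, π̄ a policy, γ ∈ (0,1) a discount factor, and let r, r' : S × A → ℝ be reward functions such that Δ(π̄,P,r,γ)(s,a) = Δ(π̄,P,r',γ)(s,a) for all s ∈ S and a ∈ A. Then for all policies π, π' and every state s ∈ S: V(π,P,r,γ)(s) − V(π',P,r,γ)(s) = V(π,P,r',γ)(s) − V(π',P,r',γ)(s). -/

import Mathlib

open Filter Finset Topology

noncomputable section

variable {S A : Type} [Fintype S] [DecidableEq S] [Fintype A] [Nonempty S] [Nonempty A]

/-- A policy assigns to each state a probability distribution over actions. -/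
def IsPolicy (π : S → A → ℝ) : Prop :=
  (∀ s a, 0 ≤ π s a) ∧ ∀ s, ∑ a, π s a = 1

/-- A transition matrix assigns to each action and state a probability distribution
over next states. -/
def IsTransition (P : A → S → S → ℝ) : Prop :=
  (∀ a s s', 0 ≤ P a s s') ∧ ∀ a s, ∑ s', P a s s' = 1

/-- The state-transition matrix induced by a policy and a transition matrix. -/
def Mmat (π : S → A → ℝ) (P : A → S → S → ℝ) : Matrix S S ℝ :=
  Matrix.of fun s s' => ∑ a, π s a * P a s s'

/-- Expected one-step reward under policy `π`. -/
def rpi (π : S → A → ℝ) (r : S × A → ℝ) (s : S) : ℝ := ∑ a, π s a * r (s, a)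

/-- Discounted value function. -/
def Vval (π : S → A → ℝ) (P : A → S → S → ℝ) (r : S × A → ℝ) (γ : ℝ) (s : S) : ℝ :=
  ∑' t : ℕ, γ ^ t * ((Mmat π P ^ t).mulVec (rpi π r)) s

/-- State-action value function. -/
def Qval (π : S → A → ℝ) (P : A → S → S → ℝ) (r : S × A → ℝ) (γ : ℝ) (s : S) (a : A) : ℝ :=
  r (s, a) + γ * ∑ s', P a s s' * Vval π P r γ s'

/-- Advantage function. -/
def Adv (π : S → A → ℝ) (P : A → S → S → ℝ) (r : S × A → ℝ) (γ : ℝ) (s : S) (a : A) : ℝ :=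
  Qval π P r γ s a - Vval π P r γ s

lemma mmat_stoch (π : S → A → ℝ) (P : A → S → S → ℝ) (hπ : IsPolicy π) (hP : IsTransition P)
    (t : ℕ) :
    (∀ s s', 0 ≤ ((Mmat π P) ^ t) s s') ∧ ∀ s, ∑ s', ((Mmat π P) ^ t) s s' = 1 := by
  induction t with
  | zero =>
    constructor
    · intro s s'
      rw [pow_zero, Matrix.one_apply]
      split <;> norm_num
    · intro s
      simp [Matrix.one_apply]
  | succ t ih =>
    obtain ⟨h1, h2⟩ := ih
    have hM0 : ∀ s s', 0 ≤ Mmat π P s s' := by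
      intro s s'
      exact Finset.sum_nonneg fun a _ => mul_nonneg (hπ.1 s a) (hP.1 a s s')
    have hM1 : ∀ s, ∑ s', Mmat π P s s' = 1 := by
      intro s
      simp only [Mmat, Matrix.of_apply]
      rw [Finset.sum_comm]
      simp_rw [← Finset.mul_sum]
      simp [hP.2, hπ.2 s]
    constructor
    · intro s s'
      rw [pow_succ, Matrix.mul_apply]
      exact Finset.sum_nonneg fun k _ => mul_nonneg (h1 s k) (hM0 k s')
    · intro s
      rw [pow_succ]
      simp only [Matrix.mul_apply]
      rw [Finset.sum_comm]
      simp_rw [← Finset.mul_sum]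
      simp [hM1, h2 s]

lemma mulVec_bound (π : S → A → ℝ) (P : A → S → S → ℝ) (hπ : IsPolicy π) (hP : IsTransition P)
    (g : S → ℝ) (t : ℕ) (s : S) :
    |((Mmat π P ^ t).mulVec g) s| ≤ Finset.univ.sup' Finset.univ_nonempty (fun x => |g x|) := by
  obtain ⟨h1, h2⟩ := mmat_stoch π P hπ hP t
  set C := Finset.univ.sup' Finset.univ_nonempty (fun x => |g x|) with hC
  calc |((Mmat π P ^ t).mulVec g) s| = |∑ s', (Mmat π P ^ t) s s' * g s'| := by
        rw [Matrix.mulVec, dotProduct]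
    _ ≤ ∑ s', |(Mmat π P ^ t) s s' * g s'| := Finset.abs_sum_le_sum_abs _ _
    _ ≤ ∑ s', (Mmat π P ^ t) s s' * C := by
        apply Finset.sum_le_sum
        intro s' _
        rw [abs_mul, abs_of_nonneg (h1 s s')]
        exact mul_le_mul_of_nonneg_left
          (Finset.le_sup' (fun x => |g x|) (Finset.mem_univ s')) (h1 s s')
    _ = C := by rw [← Finset.sum_mul, h2 s, one_mul]

lemma summable_term (π : S → A → ℝ) (P : A → S → S → ℝ) (hπ : IsPolicy π) (hP : IsTransition P)
    (γ : ℝ) (hγ : γ ∈ Set.Ioo (0 : ℝ) 1) (g : S → ℝ) (s : S) :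
    Summable (fun t : ℕ => γ ^ t * ((Mmat π P ^ t).mulVec g) s) := by
  set C := Finset.univ.sup' Finset.univ_nonempty (fun x => |g x|) with hC
  apply Summable.of_norm_bounded (g := fun t : ℕ => γ ^ t * C)
  · exact (summable_geometric_of_lt_one hγ.1.le hγ.2).mul_right C
  · intro t
    rw [Real.norm_eq_abs, abs_mul, abs_pow, abs_of_nonneg hγ.1.le]
    exact mul_le_mul_of_nonneg_left (mulVec_bound π P hπ hP g t s) (pow_nonneg hγ.1.le t)

/-- **Rewards with matching advantage functions induce the same value differences.** -/
theorem matching_advantages_same_value_differences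
    (P : A → S → S → ℝ) (πbar : S → A → ℝ)
    (hP : IsTransition P) (hπbar : IsPolicy πbar)
    (γ : ℝ) (hγ : γ ∈ Set.Ioo (0 : ℝ) 1)
    (r r' : S × A → ℝ)
    (hΔ : ∀ s a, Adv πbar P r γ s a = Adv πbar P r' γ s a)
    (π π' : S → A → ℝ) (hπ : IsPolicy π) (hπ' : IsPolicy π') (s : S) :
    Vval π P r γ s - Vval π' P r γ s = Vval π P r' γ s - Vval π' P r' γ s := by
  set f : S → ℝ := fun x => Vval πbar P r γ x - Vval πbar P r' γ x with hf
  -- r - r' is a potential-shaping term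
  have hr : ∀ x a, r (x, a) - r' (x, a) = f x - γ * ∑ s', P a x s' * f s' := by
    intro x a
    have h := hΔ x a
    simp only [Adv, Qval] at h
    have hsum : ∑ s', P a x s' * f s'
        = ∑ s', P a x s' * Vval πbar P r γ s' - ∑ s', P a x s' * Vval πbar P r' γ s' := by
      rw [← Finset.sum_sub_distrib]
      refine Finset.sum_congr rfl fun s' _ => ?_
      simp only [hf]; ring
    rw [hsum]; simp only [hf]; linarith
  -- key: for any policy ρ and state x, V(ρ,r) x - V(ρ,r') x = f x
  have key : ∀ ρ : S → A → ℝ, IsPolicy ρ → ∀ x, Vval ρ P r γ x - Vval ρ P r' γ x = f x := by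
    intro ρ hρ x
    have hsum1 := summable_term ρ P hρ hP γ hγ (rpi ρ r) x
    have hsum2 := summable_term ρ P hρ hP γ hγ (rpi ρ r') x
    have hdiff : Vval ρ P r γ x - Vval ρ P r' γ x
        = ∑' t : ℕ, (γ ^ t * ((Mmat ρ P ^ t).mulVec (rpi ρ r)) x
            - γ ^ t * ((Mmat ρ P ^ t).mulVec (rpi ρ r')) x) := by
      rw [Vval, Vval, ← Summable.tsum_sub hsum1 hsum2]
    rw [hdiff]
    have hg : ∀ y, rpi ρ r y - rpi ρ r' y = f y - γ * ((Mmat ρ P).mulVec f) y := by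
      intro y
      have hmv : ((Mmat ρ P).mulVec f) y = ∑ a, ρ y a * ∑ s', P a y s' * f s' := by
        rw [Matrix.mulVec, dotProduct]
        simp only [Mmat, Matrix.of_apply]
        simp_rw [Finset.sum_mul, Finset.mul_sum]
        rw [Finset.sum_comm]
        refine Finset.sum_congr rfl fun a _ => Finset.sum_congr rfl fun s' _ => by ring
      rw [hmv, rpi, rpi, ← Finset.sum_sub_distrib]
      have h1 : ∑ a, (ρ y a * r (y, a) - ρ y a * r' (y, a))
          = ∑ a, ρ y a * (f y - γ * ∑ s', P a y s' * f s') := by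
        refine Finset.sum_congr rfl fun a _ => ?_
        rw [← mul_sub, hr y a]
      rw [h1]
      have h2 : ∑ a, ρ y a * (f y - γ * ∑ s', P a y s' * f s')
          = (∑ a, ρ y a) * f y - γ * ∑ a, ρ y a * ∑ s', P a y s' * f s' := by
        rw [Finset.sum_mul, Finset.mul_sum, ← Finset.sum_sub_distrib]
        refine Finset.sum_congr rfl fun a _ => by ring
      rw [h2, hρ.2 y, one_mul]
    have hterm : ∀ t : ℕ, γ ^ t * ((Mmat ρ P ^ t).mulVec (rpi ρ r)) x
        - γ ^ t * ((Mmat ρ P ^ t).mulVec (rpi ρ r')) x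
        = γ ^ t * ((Mmat ρ P ^ t).mulVec f) x
          - γ ^ (t + 1) * ((Mmat ρ P ^ (t + 1)).mulVec f) x := by
      intro t
      have expand : ∀ g : S → ℝ, ((Mmat ρ P ^ t).mulVec g) x
          = ∑ s', (Mmat ρ P ^ t) x s' * g s' := fun g => by
        rw [Matrix.mulVec, dotProduct]
      have hpow : ((Mmat ρ P ^ (t + 1)).mulVec f) x
          = ((Mmat ρ P ^ t).mulVec ((Mmat ρ P).mulVec f)) x := by
        rw [pow_succ, ← Matrix.mulVec_mulVec]
      have hlin : ((Mmat ρ P ^ t).mulVec (rpi ρ r)) x - ((Mmat ρ P ^ t).mulVec (rpi ρ r')) x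
          = ((Mmat ρ P ^ t).mulVec f) x - γ * ((Mmat ρ P ^ t).mulVec ((Mmat ρ P).mulVec f)) x := by
        rw [expand, expand, expand, expand, ← Finset.sum_sub_distrib, Finset.mul_sum,
          ← Finset.sum_sub_distrib]
        refine Finset.sum_congr rfl fun s' _ => ?_
        rw [← mul_sub, hg s']
        ring
      rw [hpow, ← mul_sub, hlin]
      ring
    have hsumf := summable_term ρ P hρ hP γ hγ f x
    set a : ℕ → ℝ := fun t => γ ^ t * ((Mmat ρ P ^ t).mulVec f) x with ha
    calc ∑' t : ℕ, (γ ^ t * ((Mmat ρ P ^ t).mulVec (rpi ρ r)) x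
            - γ ^ t * ((Mmat ρ P ^ t).mulVec (rpi ρ r')) x)
        = ∑' t : ℕ, (a t - a (t + 1)) := by
          refine tsum_congr fun t => ?_
          exact hterm t
      _ = (∑' t : ℕ, a t) - ∑' t : ℕ, a (t + 1) :=
          Summable.tsum_sub hsumf ((summable_nat_add_iff 1).mpr hsumf)
      _ = a 0 := by
          have := Summable.tsum_eq_zero_add hsumf
          linarith
      _ = f x := by simp [ha, Matrix.one_mulVec]
  have h1 := key π hπ s
  have h2 := key π' hπ' s
  linarith
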